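/- For a square matrix M and x ≥ 0, ∫₀^x e^{M·t} dt = γ(M·x) · x, where γ(N) = Σ_{k≥0} N^k/(k+1)!. -/

import Mathlib

open MeasureTheory intervalIntegral

attribute [local instance] Matrix.linftyOpNormedRing Matrix.linftyOpNormedAlgebra

/-- γ(N) = Σ_{k≥0} N^k/(k+1)!. -/
noncomputable def matGamma {m : ℕ} (N : Matrix (Fin m) (Fin m) ℝ) : Matrix (Fin m) (Fin m) ℝ :=
  ∑' k : ℕ, (((k + 1).factorial : ℝ))⁻¹ • N ^ k

/-- For x ≥ 0, ∫₀^x e^{M·t} dt = γ(M·x) · x. -/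
theorem integral_exp_eq_matGamma_smul {m : ℕ} (M : Matrix (Fin m) (Fin m) ℝ) (x : ℝ)
    (hx : 0 ≤ x) :
    (∫ t in (0:ℝ)..x, NormedSpace.exp (t • M)) = x • matGamma (x • M) := by
  letI : ContinuousENorm (Matrix (Fin m) (Fin m) ℝ) := SeminormedAddGroup.toContinuousENorm
  set F : ℕ → ℝ → Matrix (Fin m) (Fin m) ℝ :=
    fun k t => ((k.factorial : ℝ))⁻¹ • (t ^ k • M ^ k) with hF
  have hexp : ∀ t : ℝ, NormedSpace.exp (t • M) = ∑' k : ℕ, F k t := by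
    intro t
    rw [NormedSpace.exp_eq_tsum (𝕂 := ℝ)]
    exact tsum_congr fun k => by rw [hF, smul_pow]
  have hcont : ∀ k : ℕ, Continuous (F k) := fun k => by
    rw [hF]; fun_prop
  have hint : ∀ k : ℕ, Integrable (F k) (volume.restrict (Set.Ioc (0:ℝ) x)) := fun k =>
    (hcont k).integrableOn_Ioc
  have hbound : ∀ k : ℕ, (∫ t in Set.Ioc (0:ℝ) x, ‖F k t‖) ≤
      ((k.factorial : ℝ))⁻¹ * (x ^ k * ‖M ^ k‖) * x := by
    intro k
    have step : (∫ t in Set.Ioc (0:ℝ) x, ‖F k t‖) ≤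
        ∫ _ in Set.Ioc (0:ℝ) x, ((k.factorial : ℝ))⁻¹ * (x ^ k * ‖M ^ k‖) := by
      apply setIntegral_mono_on (hint k).norm (integrable_const _) measurableSet_Ioc
      intro t ht
      rw [hF]
      simp only [norm_smul, norm_inv, Real.norm_natCast, norm_pow, Real.norm_eq_abs, Nat.abs_cast]
      have ht' : |t| ^ k ≤ x ^ k :=
        pow_le_pow_left₀ (abs_nonneg t) (by rw [abs_of_pos ht.1]; exact ht.2) k
      exact mul_le_mul_of_nonneg_left
        (mul_le_mul_of_nonneg_right ht' (norm_nonneg (M ^ k))) (by positivity)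
    calc (∫ t in Set.Ioc (0:ℝ) x, ‖F k t‖) ≤ _ := step
      _ = ((k.factorial : ℝ))⁻¹ * (x ^ k * ‖M ^ k‖) * x := by
          rw [setIntegral_const, Real.volume_real_Ioc_of_le hx, sub_zero,
            smul_eq_mul, mul_comm]
  have hsum : Summable fun k : ℕ => ∫ t in Set.Ioc (0:ℝ) x, ‖F k t‖ := by
    apply Summable.of_nonneg_of_le
      (fun k => integral_nonneg fun t => norm_nonneg _) hbound
    have h1 : Summable fun k : ℕ => ‖((k.factorial : ℝ))⁻¹ • ((x • M) ^ k)‖ :=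
      NormedSpace.norm_expSeries_summable' (x • M)
    apply (h1.mul_right x).of_nonneg_of_le (fun k => by positivity)
    intro k
    refine le_of_eq ?_
    rw [smul_pow, norm_smul, norm_smul, norm_inv, Real.norm_natCast, norm_pow x,
      Real.norm_eq_abs, abs_of_nonneg hx, mul_assoc]
  have hHS := MeasureTheory.hasSum_integral_of_summable_integral_norm hint hsum
  have hterm : ∀ k : ℕ, (∫ t in Set.Ioc (0:ℝ) x, F k t)
      = (((k.factorial : ℝ))⁻¹ * (x ^ (k + 1) / (k + 1))) • M ^ k := by
    intro k
    rw [hF]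
    simp only
    rw [MeasureTheory.integral_smul, _root_.integral_smul_const,
      ← intervalIntegral.integral_of_le hx, integral_pow, smul_smul]
    norm_num
  simp_rw [hterm] at hHS
  have hgsum : Summable fun k : ℕ => (((k + 1).factorial : ℝ))⁻¹ • (x • M) ^ k := by
    apply Summable.of_norm_bounded (NormedSpace.norm_expSeries_summable' (𝕂 := ℝ) (x • M))
    intro k
    simp only [norm_smul, norm_inv, Real.norm_natCast]
    apply mul_le_mul_of_nonneg_right _ (norm_nonneg _)
    apply inv_anti₀ (by positivity)
    exact_mod_cast Nat.factorial_le (Nat.le_succ k)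
  have hg : HasSum (fun k : ℕ => (((k + 1).factorial : ℝ))⁻¹ • (x • M) ^ k)
      (matGamma (x • M)) := hgsum.hasSum
  have hg2 := hg.const_smul x
  have hfun : (fun k : ℕ => x • ((((k + 1).factorial : ℝ))⁻¹ • (x • M) ^ k))
      = fun k : ℕ => (((k.factorial : ℝ))⁻¹ * (x ^ (k + 1) / (k + 1))) • M ^ k := by
    funext k
    rw [smul_pow, smul_smul, smul_smul]
    congr 1
    rw [Nat.factorial_succ]
    have hk : ((k.factorial : ℝ)) ≠ 0 := Nat.cast_ne_zero.mpr k.factorial_ne_zero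
    have hk1 : ((k : ℝ) + 1) ≠ 0 := by positivity
    push_cast
    field_simp
    ring
  rw [hfun] at hg2
  rw [intervalIntegral.integral_of_le hx]
  calc (∫ t in Set.Ioc (0:ℝ) x, NormedSpace.exp (t • M))
      = ∫ t in Set.Ioc (0:ℝ) x, ∑' k : ℕ, F k t := by
        exact setIntegral_congr_fun measurableSet_Ioc fun t _ => hexp t
    _ = x • matGamma (x • M) := hHS.unique hg2
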